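/- For every integer n ≥ 8 there exists an n-vertex graph that is P̂₄-free and contains at least ⌊n²/8⌋ triangles. (Such a graph is obtained from the complete bipartite graph K_{⌊n/2⌋,⌈n/2⌉} by adding a perfect matching inside one part of even size.) -/
import Mathlib


/-- `H` is contained in `G` as a (not necessarily induced) subgraph:
there is an injective map of vertices carrying edges of `H` to edges of `G`. -/
def Contains {α β : Type*} (H : SimpleGraph α) (G : SimpleGraph β) : Prop :=
  ∃ f : α → β, Function.Injective f ∧ ∀ ⦃a b⦄, H.Adj a b → G.Adj (f a) (f b)

/-- The suspension `P̂₄` of the path on 4 vertices: a new apex vertex `none`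
is joined to all four vertices of `P₄`. -/
def hatP4 : SimpleGraph (Option (Fin 4)) :=
  SimpleGraph.fromRel (fun a b =>
    (∃ i j, a = some i ∧ b = some j ∧ (SimpleGraph.pathGraph 4).Adj i j) ∨ a = none)

/-- The number of triangles (3-cliques) of a graph. -/
noncomputable def triangleCount {V : Type*} (G : SimpleGraph V) : ℕ :=
  (G.cliqueSet 3).ncard

/-- Bipartite graph with parts `A = [0, 2q)`, `B = [2q, n)`, all edges between
the parts, plus a perfect matching `{2t, 2t+1}` inside `A`. -/
def myG (n q : ℕ) : SimpleGraph (Fin n) :=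
  SimpleGraph.fromRel (fun i j =>
    (((i : ℕ) < 2*q) ↔ ¬ ((j : ℕ) < 2*q)) ∨
    ((i : ℕ) < 2*q ∧ (j : ℕ) < 2*q ∧ (i : ℕ)/2 = (j : ℕ)/2))

lemma myG_adj {n q : ℕ} {i j : Fin n} :
    (myG n q).Adj i j ↔ i ≠ j ∧
      ((((i : ℕ) < 2*q) ↔ ¬ ((j : ℕ) < 2*q)) ∨
       ((i : ℕ) < 2*q ∧ (j : ℕ) < 2*q ∧ (i : ℕ)/2 = (j : ℕ)/2)) := by
  rw [myG, SimpleGraph.fromRel_adj]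
  constructor
  · rintro ⟨hne, (h | h) | (h | ⟨h1, h2, h3⟩)⟩
    · exact ⟨hne, Or.inl h⟩
    · exact ⟨hne, Or.inr h⟩
    · exact ⟨hne, Or.inl (by tauto)⟩
    · exact ⟨hne, Or.inr ⟨h2, h1, h3.symm⟩⟩
  · rintro ⟨hne, h⟩
    exact ⟨hne, Or.inl h⟩

lemma hatP4_none_adj (i : Fin 4) : hatP4.Adj none (some i) := by
  rw [hatP4, SimpleGraph.fromRel_adj]
  exact ⟨by simp, Or.inl (Or.inr rfl)⟩

lemma hatP4_some_adj {i j : Fin 4} (h : (SimpleGraph.pathGraph 4).Adj i j) :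
    hatP4.Adj (some i) (some j) := by
  rw [hatP4, SimpleGraph.fromRel_adj]
  refine ⟨by simpa using h.ne, Or.inl (Or.inl ⟨i, j, rfl, rfl, h⟩)⟩

lemma path01 : (SimpleGraph.pathGraph 4).Adj 0 1 := by
  rw [SimpleGraph.pathGraph_adj]; left; rfl

lemma path12 : (SimpleGraph.pathGraph 4).Adj 1 2 := by
  rw [SimpleGraph.pathGraph_adj]; left; rfl

lemma path23 : (SimpleGraph.pathGraph 4).Adj 2 3 := by
  rw [SimpleGraph.pathGraph_adj]; left; rfl

lemma myG_free (n q : ℕ) : ¬ Contains hatP4 (myG n q) := by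
  rintro ⟨f, hinj, hmap⟩
  have hv0 := myG_adj.mp (hmap (hatP4_none_adj 0))
  have hv1 := myG_adj.mp (hmap (hatP4_none_adj 1))
  have hv2 := myG_adj.mp (hmap (hatP4_none_adj 2))
  have hv3 := myG_adj.mp (hmap (hatP4_none_adj 3))
  have h01 := myG_adj.mp (hmap (hatP4_some_adj path01))
  have h12 := myG_adj.mp (hmap (hatP4_some_adj path12))
  have h23 := myG_adj.mp (hmap (hatP4_some_adj path23))
  have d02 : (f (some 0) : ℕ) ≠ (f (some 2) : ℕ) := by
    intro h; exact (by decide : (some 0 : Option (Fin 4)) ≠ some 2) (hinj (Fin.ext h))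
  have d03 : (f (some 0) : ℕ) ≠ (f (some 3) : ℕ) := by
    intro h; exact (by decide : (some 0 : Option (Fin 4)) ≠ some 3) (hinj (Fin.ext h))
  have d13 : (f (some 1) : ℕ) ≠ (f (some 3) : ℕ) := by
    intro h; exact (by decide : (some 1 : Option (Fin 4)) ≠ some 3) (hinj (Fin.ext h))
  obtain ⟨e0, p0⟩ := hv0
  obtain ⟨e1, p1⟩ := hv1
  obtain ⟨e2, p2⟩ := hv2
  obtain ⟨e3, p3⟩ := hv3
  obtain ⟨e01, q01⟩ := h01
  obtain ⟨e12, q12⟩ := h12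
  obtain ⟨e23, q23⟩ := h23
  have e0' : (f none : ℕ) ≠ (f (some 0) : ℕ) := fun h => e0 (Fin.ext h)
  have e1' : (f none : ℕ) ≠ (f (some 1) : ℕ) := fun h => e1 (Fin.ext h)
  have e2' : (f none : ℕ) ≠ (f (some 2) : ℕ) := fun h => e2 (Fin.ext h)
  have e3' : (f none : ℕ) ≠ (f (some 3) : ℕ) := fun h => e3 (Fin.ext h)
  have e01' : (f (some 0) : ℕ) ≠ (f (some 1) : ℕ) := fun h => e01 (Fin.ext h)
  have e12' : (f (some 1) : ℕ) ≠ (f (some 2) : ℕ) := fun h => e12 (Fin.ext h)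
  have e23' : (f (some 2) : ℕ) ≠ (f (some 3) : ℕ) := fun h => e23 (Fin.ext h)
  omega

lemma myG_count (n q : ℕ) (h2q : 2*q ≤ n) :
    q * (n - 2*q) ≤ triangleCount (myG n q) := by
  classical
  haveI : DecidableRel (myG n q).Adj := Classical.decRel _
  rw [triangleCount, ← SimpleGraph.coe_cliqueFinset, Set.ncard_coe_finset]
  let g : Fin q × Fin (n - 2*q) → Finset (Fin n) := fun p =>
    { ⟨2*p.1.val, by have := p.1.2; have := p.2.2; omega⟩,
      ⟨2*p.1.val + 1, by have := p.1.2; have := p.2.2; omega⟩,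
      ⟨2*q + p.2.val, by have := p.1.2; have := p.2.2; omega⟩ }
  have hmem : ∀ p : Fin q × Fin (n - 2*q), g p ∈ (myG n q).cliqueFinset 3 := by
    intro p
    have h1 := p.1.2
    have h2 := p.2.2
    rw [SimpleGraph.mem_cliqueFinset_iff, SimpleGraph.is3Clique_triple_iff]
    refine ⟨?_, ?_, ?_⟩ <;> rw [myG_adj] <;>
      refine ⟨Fin.ne_of_val_ne (by first | omega | (simp <;> omega)), ?_⟩
    · exact Or.inr ⟨by first | omega | (simp <;> omega), by first | omega | (simp <;> omega),
        by first | omega | (simp <;> omega)⟩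
    · exact Or.inl (by first | omega | (simp <;> omega))
    · exact Or.inl (by first | omega | (simp <;> omega))
  have ginj : Function.Injective g := by
    intro p p' h
    have hp1 := p.1.2; have hp2 := p.2.2; have hp1' := p'.1.2; have hp2' := p'.2.2
    have m1 : (⟨2*p.1.val, by omega⟩ : Fin n) ∈ g p' := by
      rw [← h]; simp [g]
    have m3 : (⟨2*q + p.2.val, by omega⟩ : Fin n) ∈ g p' := by
      rw [← h]; simp [g]
    simp only [g, Finset.mem_insert, Finset.mem_singleton, Fin.ext_iff] at m1 m3
    have : p.1.val = p'.1.val := by omega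
    have : p.2.val = p'.2.val := by omega
    exact Prod.ext (Fin.ext (by omega)) (Fin.ext (by omega))
  calc q * (n - 2*q) = Fintype.card (Fin q × Fin (n - 2*q)) := by simp
    _ = (Finset.univ.image g).card := by
        rw [Finset.card_image_of_injective _ ginj, Finset.card_univ]
    _ ≤ ((myG n q).cliqueFinset 3).card := by
        apply Finset.card_le_card
        intro s hs
        obtain ⟨p, _, rfl⟩ := Finset.mem_image.mp hs
        exact hmem p

theorem stmt_5 (n : ℕ) (hn : 8 ≤ n) :
    ∃ G : SimpleGraph (Fin n), ¬ Contains hatP4 G ∧ n ^ 2 / 8 ≤ triangleCount G := by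
  set q := (n+1)/4 with hq
  have hqb : 4*q ≤ n+1 ∧ n+1 < 4*q+4 := by omega
  refine ⟨myG n q, myG_free n q, ?_⟩
  have hc := myG_count n q (by omega)
  refine le_trans ?_ hc
  have hm : n - 2*q + 2*q = n := by omega
  set m := n - 2*q with hmdef
  have h8 : n^2 ≤ 8*(q*m) + 7 := by
    have hb1 : 2*q ≤ m + 1 := by omega
    have hb2 : m ≤ 2*q + 2 := by omega
    have hn2 : n = m + 2*q := by omega
    zify at hb1 hb2 hn2 ⊢
    nlinarith [hn2, hb1, hb2, mul_nonneg
      (by linarith : (0:ℤ) ≤ (m:ℤ) + 1 - 2*q)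
      (by linarith : (0:ℤ) ≤ 2*(q:ℤ) + 2 - m)]
  calc n^2/8 ≤ (8*(q*m)+7)/8 := Nat.div_le_div_right h8
    _ = q*m := by omega
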